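/- arXiv:2404.13155 — 2 statements merged into one kernel-verified Lean document; each statement's English description precedes it below -/
import Mathlib

section
/- Let n ≥ 4, let G be a simple graph on a vertex set V with |V| = n, m edges, and degree function d, and let f be a rectilinear drawing of the complete graph on a vertex set W with |W| = n. Then the average over all n! bijections σ : V → W of the crossing number of the rectilinear drawing v ↦ f(σ(v)) of G equals (cr(f) / (3·C(n,4))) · ( C(m,2) − Σ_{v∈V} C(d(v),2) ). -/
/-- A rectilinear drawing: an injective map of the vertices into the plane
with no three vertex images collinear. -/
def IsRectilinearDrawing {V : Type*} (f : V → ℝ × ℝ) : Prop :=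
  Function.Injective f ∧
    ∀ a b c : V, a ≠ b → a ≠ c → b ≠ c →
      ¬ Collinear ℝ ({f a, f b, f c} : Set (ℝ × ℝ))

/-- The open straight-line segment joining the images of the endpoints of an edge. -/
def edgeSeg {V : Type*} (f : V → ℝ × ℝ) : Sym2 V → Set (ℝ × ℝ) :=
  Sym2.lift ⟨fun a b => openSegment ℝ (f a) (f b), fun a b => openSegment_symm ℝ (f a) (f b)⟩

/-- Two edges (with disjoint vertex sets) cross if their open segments meet. -/
def EdgesCross {V : Type*} (f : V → ℝ × ℝ) (e₁ e₂ : Sym2 V) : Prop :=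
  (∀ v, v ∈ e₁ → v ∉ e₂) ∧ (edgeSeg f e₁ ∩ edgeSeg f e₂).Nonempty

lemma edgesCross_symm {V : Type*} (f : V → ℝ × ℝ) : Symmetric (EdgesCross f) :=
  fun _ _ h => ⟨fun v hv hv' => h.1 v hv' hv, by rw [Set.inter_comm]; exact h.2⟩

/-- The crossing number of a drawing: the number of unordered pairs of edges of `G`
that cross in the drawing. -/
noncomputable def crossingNumber {V : Type*} (G : SimpleGraph V) (f : V → ℝ × ℝ) : ℕ :=
  Set.ncard {p : Sym2 (Sym2 V) |
    (∀ e ∈ p, e ∈ G.edgeSet) ∧ p ∈ Sym2.fromRel (r := EdgesCross f) ⟨fun _ _ h => edgesCross_symm f h⟩}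

/-- The rectilinear crossing number of a graph. -/
noncomputable def rcr {V : Type*} (G : SimpleGraph V) : ℕ :=
  sInf {k | ∃ f : V → ℝ × ℝ, IsRectilinearDrawing f ∧ crossingNumber G f = k}

/-- The complete balanced `r`-partite graph with `r` parts of size `m`. -/
def completeBalanced (r m : ℕ) : SimpleGraph (Fin r × Fin m) :=
  SimpleGraph.comap Prod.fst ⊤

instance (r m : ℕ) : DecidableRel (completeBalanced r m).Adj :=
  fun u v => inferInstanceAs (Decidable (u.1 ≠ v.1))

/-- The balanced layered graph with `r` layers of size `m`: all edges between
consecutive layers. -/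
def layeredGraph (r m : ℕ) : SimpleGraph (Fin r × Fin m) where
  Adj u v := u.1.1 + 1 = v.1.1 ∨ v.1.1 + 1 = u.1.1
  symm := ⟨fun _ _ h => h.symm⟩
  loopless := ⟨fun u h => by cases h <;> omega⟩

instance (r m : ℕ) : DecidableRel (layeredGraph r m).Adj :=
  fun u v => inferInstanceAs (Decidable (u.1.1 + 1 = v.1.1 ∨ v.1.1 + 1 = u.1.1))

/-- The `s`-fold blow-up of a graph `G`. -/
def blowup {V : Type*} (G : SimpleGraph V) (s : ℕ) : SimpleGraph (V × Fin s) :=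
  SimpleGraph.comap Prod.fst G


set_option maxHeartbeats 1000000
open Finset
open scoped Classical

section crossing_aux
variable {V W : Type*}

lemma filter_card_congr {α : Type*} [Fintype α] {p q : α → Prop}
    {hp : DecidablePred p} {hq : DecidablePred q} (h : ∀ x, p x ↔ q x) :
    (@Finset.filter _ p hp Finset.univ).card = (@Finset.filter _ q hq Finset.univ).card := by
  have hpq : p = q := funext fun x => propext (h x)
  subst hpq
  rw [Subsingleton.elim hp hq]

/-- seg-crossing of four points -/
def SegX (p q r s : ℝ × ℝ) : Prop :=
  (openSegment ℝ p q ∩ openSegment ℝ r s).Nonempty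

lemma edgesCross_mk' (g : V → ℝ × ℝ) (a b c d : V) :
    EdgesCross g s(a,b) s(c,d) ↔
      ((a ≠ c ∧ a ≠ d ∧ b ≠ c ∧ b ≠ d) ∧ SegX (g a) (g b) (g c) (g d)) := by
  constructor
  · rintro ⟨h1, h2⟩
    refine ⟨⟨?_, ?_, ?_, ?_⟩, ?_⟩
    · exact fun e => h1 a (by simp) (by simp [e])
    · exact fun e => h1 a (by simp) (by simp [e])
    · exact fun e => h1 b (by simp) (by simp [e])
    · exact fun e => h1 b (by simp) (by simp [e])
    · simpa [edgeSeg, SegX] using h2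
  · rintro ⟨⟨h1, h2, h3, h4⟩, h5⟩
    refine ⟨?_, by simpa [edgeSeg, SegX] using h5⟩
    intro v hv hv'
    rw [Sym2.mem_iff] at hv hv'
    rcases hv with rfl | rfl <;> rcases hv' with e | e <;> tauto

lemma eight_mul_cr [Fintype V] [DecidableEq V] (G : SimpleGraph V) (g : V → ℝ × ℝ) :
    (Finset.univ.filter fun t : (V × V) × V × V =>
        G.Adj t.1.1 t.1.2 ∧ G.Adj t.2.1 t.2.2 ∧ EdgesCross g s(t.1.1, t.1.2) s(t.2.1, t.2.2)).card
      = 8 * crossingNumber G g := by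
  classical
  set S : Set (Sym2 (Sym2 V)) :=
    {p | (∀ e ∈ p, e ∈ G.edgeSet) ∧ p ∈ Sym2.fromRel (r := EdgesCross g) ⟨fun _ _ h => edgesCross_symm g h⟩} with hS
  have hfin : S.Finite := Set.toFinite S
  have hcr : crossingNumber G g = hfin.toFinset.card := by
    rw [crossingNumber, Set.ncard_eq_toFinset_card _ hfin]
  set T := Finset.univ.filter fun t : (V × V) × V × V =>
      G.Adj t.1.1 t.1.2 ∧ G.Adj t.2.1 t.2.2 ∧ EdgesCross g s(t.1.1, t.1.2) s(t.2.1, t.2.2)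
    with hT
  have maps : ∀ t ∈ T, (s(s(t.1.1, t.1.2), s(t.2.1, t.2.2)) : Sym2 (Sym2 V)) ∈ hfin.toFinset := by
    intro t ht
    rw [hT, Finset.mem_filter] at ht
    obtain ⟨-, h1, h2, h3⟩ := ht
    rw [Set.Finite.mem_toFinset]
    refine ⟨?_, Sym2.fromRel_prop.mpr h3⟩
    intro e he
    rw [Sym2.mem_iff] at he
    rcases he with rfl | rfl
    · exact G.mem_edgeSet.mpr h1
    · exact G.mem_edgeSet.mpr h2
  rw [Finset.card_eq_sum_card_fiberwise maps, hcr]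
  have fib : ∀ p ∈ hfin.toFinset,
      (T.filter fun t => (s(s(t.1.1, t.1.2), s(t.2.1, t.2.2)) : Sym2 (Sym2 V)) = p).card = 8 := by
    intro p hp
    induction p using Sym2.ind with
    | _ e₁ e₂ =>
      induction e₁ using Sym2.ind with
      | _ a b =>
        induction e₂ using Sym2.ind with
        | _ c d =>
          rw [Set.Finite.mem_toFinset] at hp
          obtain ⟨hedge, hcross⟩ := hp
          have hab : G.Adj a b := G.mem_edgeSet.mp (hedge _ (by rw [Sym2.mem_iff]; left; rfl))
          have hcd : G.Adj c d := G.mem_edgeSet.mp (hedge _ (by rw [Sym2.mem_iff]; right; rfl))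
          have hX : EdgesCross g s(a,b) s(c,d) := Sym2.fromRel_prop.mp hcross
          obtain ⟨⟨hac, had, hbc, hbd⟩, hseg⟩ := (edgesCross_mk' g a b c d).mp hX
          have hab' : a ≠ b := hab.ne
          have hcd' : c ≠ d := hcd.ne
          have hX2 : EdgesCross g s(c,d) s(a,b) := edgesCross_symm g hX
          have hset : (T.filter fun t =>
                (s(s(t.1.1, t.1.2), s(t.2.1, t.2.2)) : Sym2 (Sym2 V)) = s(s(a,b), s(c,d)))
              = {((a,b),(c,d)), ((b,a),(c,d)), ((a,b),(d,c)), ((b,a),(d,c)),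
                 ((c,d),(a,b)), ((c,d),(b,a)), ((d,c),(a,b)), ((d,c),(b,a))} := by
            ext ⟨⟨t1, t2⟩, t3, t4⟩
            simp only [Finset.mem_filter, hT, Finset.mem_univ, true_and, Finset.mem_insert,
              Finset.mem_singleton, Prod.mk.injEq]
            constructor
            · rintro ⟨-, hφ⟩
              rw [Sym2.eq_iff] at hφ
              rcases hφ with ⟨h5, h6⟩ | ⟨h5, h6⟩ <;> rw [Sym2.eq_iff] at h5 h6 <;>
                rcases h5 with ⟨rfl, rfl⟩ | ⟨rfl, rfl⟩ <;>
                rcases h6 with ⟨rfl, rfl⟩ | ⟨rfl, rfl⟩ <;> simp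
            · intro hmem
              have key : ∀ p q r s : V, s(p,q) = s(a,b) ∧ s(r,s) = s(c,d) ∨
                  s(p,q) = s(c,d) ∧ s(r,s) = s(a,b) →
                  (G.Adj p q ∧ G.Adj r s ∧ EdgesCross g s(p,q) s(r,s)) ∧
                    (s(s(p,q), s(r,s)) : Sym2 (Sym2 V)) = s(s(a,b), s(c,d)) := by
                rintro p q r s (⟨h5, h6⟩ | ⟨h5, h6⟩)
                · refine ⟨⟨?_, ?_, ?_⟩, by rw [h5, h6]⟩
                  · rw [← G.mem_edgeSet, h5, G.mem_edgeSet]; exact hab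
                  · rw [← G.mem_edgeSet, h6, G.mem_edgeSet]; exact hcd
                  · rw [h5, h6]; exact hX
                · refine ⟨⟨?_, ?_, ?_⟩, by rw [h5, h6, Sym2.eq_swap]⟩
                  · rw [← G.mem_edgeSet, h5, G.mem_edgeSet]; exact hcd
                  · rw [← G.mem_edgeSet, h6, G.mem_edgeSet]; exact hab
                  · rw [h5, h6]; exact hX2
              rcases hmem with ⟨⟨rfl, rfl⟩, rfl, rfl⟩ | ⟨⟨rfl, rfl⟩, rfl, rfl⟩ |
                ⟨⟨rfl, rfl⟩, rfl, rfl⟩ | ⟨⟨rfl, rfl⟩, rfl, rfl⟩ | ⟨⟨rfl, rfl⟩, rfl, rfl⟩ |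
                ⟨⟨rfl, rfl⟩, rfl, rfl⟩ | ⟨⟨rfl, rfl⟩, rfl, rfl⟩ | ⟨⟨rfl, rfl⟩, rfl, rfl⟩
              all_goals first
                | exact key t1 t2 t3 t4 (Or.inl ⟨rfl, rfl⟩)
                | exact key t1 t2 t3 t4 (Or.inl ⟨Sym2.eq_swap, rfl⟩)
                | exact key t1 t2 t3 t4 (Or.inl ⟨rfl, Sym2.eq_swap⟩)
                | exact key t1 t2 t3 t4 (Or.inl ⟨Sym2.eq_swap, Sym2.eq_swap⟩)
                | exact key t1 t2 t3 t4 (Or.inr ⟨rfl, rfl⟩)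
                | exact key t1 t2 t3 t4 (Or.inr ⟨rfl, Sym2.eq_swap⟩)
                | exact key t1 t2 t3 t4 (Or.inr ⟨Sym2.eq_swap, rfl⟩)
                | exact key t1 t2 t3 t4 (Or.inr ⟨Sym2.eq_swap, Sym2.eq_swap⟩)
          rw [hset]
          rw [Finset.card_insert_of_notMem (by simp [Prod.ext_iff]; tauto),
            Finset.card_insert_of_notMem (by simp [Prod.ext_iff]; tauto),
            Finset.card_insert_of_notMem (by simp [Prod.ext_iff]; tauto),
            Finset.card_insert_of_notMem (by simp [Prod.ext_iff]; tauto),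
            Finset.card_insert_of_notMem (by simp [Prod.ext_iff]; tauto),
            Finset.card_insert_of_notMem (by simp [Prod.ext_iff]; tauto),
            Finset.card_insert_of_notMem (by simp [Prod.ext_iff]; tauto),
            Finset.card_singleton]
  rw [Finset.sum_congr rfl fib, Finset.sum_const, smul_eq_mul, mul_comm]

lemma card_extensions [Fintype V] [Fintype W] [DecidableEq V] [DecidableEq W]
    (h : Fintype.card V = Fintype.card W)
    {a b c d : V} {x y z w : W}
    (hab : a ≠ b) (hac : a ≠ c) (had : a ≠ d) (hbc : b ≠ c) (hbd : b ≠ d) (hcd : c ≠ d)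
    (hxy : x ≠ y) (hxz : x ≠ z) (hxw : x ≠ w) (hyz : y ≠ z) (hyw : y ≠ w) (hzw : z ≠ w) :
    (Finset.univ.filter fun σ : V ≃ W => σ a = x ∧ σ b = y ∧ σ c = z ∧ σ d = w).card
      = Nat.factorial (Fintype.card V - 4) := by
  classical
  set u : Fin 4 → V := fun i => if i = 0 then a else if i = 1 then b else if i = 2 then c else d
    with hu
  set v : Fin 4 → W := fun i => if i = 0 then x else if i = 1 then y else if i = 2 then z else w
    with hv
  have hu0 : u 0 = a := rfl
  have hu1 : u 1 = b := rfl
  have hu2 : u 2 = c := rfl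
  have hu3 : u 3 = d := rfl
  have hv0 : v 0 = x := rfl
  have hv1 : v 1 = y := rfl
  have hv2 : v 2 = z := rfl
  have hv3 : v 3 = w := rfl
  have hui : Function.Injective u := by
    intro i j hij
    fin_cases i <;> fin_cases j <;> simp_all [hu]
  have hvi : Function.Injective v := by
    intro i j hij
    fin_cases i <;> fin_cases j <;> simp_all [hv]
  set e₀ : (Set.range u) ≃ (Set.range v) :=
    (Equiv.ofInjective u hui).symm.trans (Equiv.ofInjective v hvi) with he₀
  have e₀val : ∀ (i : Fin 4) (hp : u i ∈ Set.range u), ((e₀ ⟨u i, hp⟩ : Set.range v) : W) = v i := by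
    intro i hp
    have h1 : (Equiv.ofInjective u hui).symm ⟨u i, hp⟩ = i := by
      rw [Equiv.symm_apply_eq]
      rfl
    simp [he₀, h1]
  have key : Fintype.card {σ : V ≃ W // ∀ p : Set.range u, σ p = e₀ p}
      = Nat.factorial (Fintype.card V - 4) := by
    rw [Fintype.card_congr (Equiv.Set.compl e₀)]
    have h1 : Fintype.card (↥(Set.range u)ᶜ) = Fintype.card V - 4 := by
      rw [Fintype.card_compl_set, Set.card_range_of_injective hui, Fintype.card_fin]
    have h2 : Fintype.card (↥(Set.range v)ᶜ) = Fintype.card V - 4 := by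
      rw [Fintype.card_compl_set, Set.card_range_of_injective hvi, Fintype.card_fin, h]
    rw [Fintype.card_equiv (Fintype.equivOfCardEq (h1.trans h2.symm)), h1]
  have cond : ∀ σ : V ≃ W,
      (σ a = x ∧ σ b = y ∧ σ c = z ∧ σ d = w) ↔ (∀ p : Set.range u, σ p = e₀ p) := by
    intro σ
    constructor
    · rintro ⟨h1, h2, h3, h4⟩ ⟨_, i, rfl⟩
      rw [e₀val i ⟨i, rfl⟩]
      fin_cases i <;> simp_all [hu0, hu1, hu2, hu3, hv0, hv1, hv2, hv3]
    · intro H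
      have g0 := H ⟨u 0, ⟨0, rfl⟩⟩
      have g1 := H ⟨u 1, ⟨1, rfl⟩⟩
      have g2 := H ⟨u 2, ⟨2, rfl⟩⟩
      have g3 := H ⟨u 3, ⟨3, rfl⟩⟩
      rw [e₀val 0 ⟨0, rfl⟩] at g0
      rw [e₀val 1 ⟨1, rfl⟩] at g1
      rw [e₀val 2 ⟨2, rfl⟩] at g2
      rw [e₀val 3 ⟨3, rfl⟩] at g3
      exact ⟨g0, g1, g2, g3⟩
  rw [← Fintype.card_subtype]
  rw [Fintype.card_congr (Equiv.subtypeEquivRight cond)]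
  exact key

/-- regrouping a sum over bijections by the image 4-tuple -/
lemma sum_regroup [Fintype V] [Fintype W] [DecidableEq V] [DecidableEq W]
    (h : Fintype.card V = Fintype.card W)
    {a b c d : V}
    (hab : a ≠ b) (hac : a ≠ c) (had : a ≠ d) (hbc : b ≠ c) (hbd : b ≠ d) (hcd : c ≠ d)
    (P : W → W → W → W → Prop) :
    ∑ σ : V ≃ W, (if P (σ a) (σ b) (σ c) (σ d) then 1 else 0)
      = Nat.factorial (Fintype.card V - 4) *
        (Finset.univ.filter fun q : (W × W) × W × W =>
          (q.1.1 ≠ q.1.2 ∧ q.2.1 ≠ q.2.2 ∧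
            (q.1.1 ≠ q.2.1 ∧ q.1.1 ≠ q.2.2 ∧ q.1.2 ≠ q.2.1 ∧ q.1.2 ≠ q.2.2)) ∧
          P q.1.1 q.1.2 q.2.1 q.2.2).card := by
  classical
  set D : Finset ((W × W) × W × W) := Finset.univ.filter fun q : (W × W) × W × W =>
      q.1.1 ≠ q.1.2 ∧ q.2.1 ≠ q.2.2 ∧
        (q.1.1 ≠ q.2.1 ∧ q.1.1 ≠ q.2.2 ∧ q.1.2 ≠ q.2.1 ∧ q.1.2 ≠ q.2.2) with hD
  have maps : ∀ σ : V ≃ W, σ ∈ (Finset.univ : Finset (V ≃ W)) →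
      ((σ a, σ b), (σ c, σ d)) ∈ D := by
    intro σ _
    rw [hD, Finset.mem_filter]
    refine ⟨Finset.mem_univ _, ?_⟩
    simp only [ne_eq, EmbeddingLike.apply_eq_iff_eq]
    tauto
  rw [← Finset.sum_fiberwise_of_maps_to maps
    (fun σ : V ≃ W => if P (σ a) (σ b) (σ c) (σ d) then (1 : ℕ) else 0)]
  have inner : ∀ q ∈ D,
      (∑ σ ∈ Finset.univ.filter (fun σ : V ≃ W => ((σ a, σ b), (σ c, σ d)) = q),
        if P (σ a) (σ b) (σ c) (σ d) then (1 : ℕ) else 0)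
      = if P q.1.1 q.1.2 q.2.1 q.2.2 then Nat.factorial (Fintype.card V - 4) else 0 := by
    intro q hq
    rw [hD, Finset.mem_filter] at hq
    obtain ⟨-, hxy, hzw, hxz, hxw, hyz, hyw⟩ := hq
    have step1 : (∑ σ ∈ Finset.univ.filter (fun σ : V ≃ W => ((σ a, σ b), (σ c, σ d)) = q),
        if P (σ a) (σ b) (σ c) (σ d) then (1 : ℕ) else 0)
        = ∑ _σ ∈ Finset.univ.filter (fun σ : V ≃ W => ((σ a, σ b), (σ c, σ d)) = q),
          if P q.1.1 q.1.2 q.2.1 q.2.2 then (1 : ℕ) else 0 := by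
      refine Finset.sum_congr rfl ?_
      intro σ hσ
      rw [Finset.mem_filter] at hσ
      obtain ⟨-, hσ⟩ := hσ
      subst hσ
      rfl
    rw [step1, Finset.sum_const, smul_eq_mul, mul_ite, mul_one, mul_zero]
    have hcard : (Finset.univ.filter (fun σ : V ≃ W => ((σ a, σ b), (σ c, σ d)) = q)).card
        = Nat.factorial (Fintype.card V - 4) := by
      rw [show (Finset.univ.filter (fun σ : V ≃ W => ((σ a, σ b), (σ c, σ d)) = q))
          = (Finset.univ.filter fun σ : V ≃ W =>
            σ a = q.1.1 ∧ σ b = q.1.2 ∧ σ c = q.2.1 ∧ σ d = q.2.2) from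
        Finset.filter_congr (fun σ _ => by
          constructor
          · intro hσ; subst hσ; exact ⟨rfl, rfl, rfl, rfl⟩
          · rintro ⟨h1, h2, h3, h4⟩
            simp [Prod.ext_iff, h1, h2, h3, h4])]
      exact card_extensions h hab hac had hbc hbd hcd hxy hxz hxw hyz hyw hzw
    rw [hcard]
  rw [Finset.sum_congr rfl inner]
  rw [← Finset.sum_filter, Finset.sum_const, smul_eq_mul, mul_comm, hD,
    Finset.filter_filter]

end crossing_aux

section counting_aux
variable {V : Type*} [Fintype V] [DecidableEq V]

lemma E_card (G : SimpleGraph V) [DecidableRel G.Adj] :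
    (Finset.univ.filter fun e : V × V => G.Adj e.1 e.2).card = 2 * G.edgeFinset.card := by
  rw [← SimpleGraph.sum_degrees_eq_twice_card_edges, Finset.card_filter,
    Fintype.sum_prod_type]
  refine Finset.sum_congr rfl fun a _ => ?_
  rw [← Finset.card_filter]
  congr 1
  ext b
  simp [SimpleGraph.mem_neighborFinset]

lemma neighbor_filter (G : SimpleGraph V) [DecidableRel G.Adj] (a : V) :
    Finset.univ.filter (fun b => G.Adj a b) = G.neighborFinset a := by
  ext b; simp [SimpleGraph.mem_neighborFinset]

/-- number of ordered pairs of ordered edges sharing no vertex -/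
lemma bad_card (G : SimpleGraph V) [DecidableRel G.Adj] {a b : V} (hab : G.Adj a b) :
    ((Finset.univ.filter fun e : V × V => G.Adj e.1 e.2).filter
        fun e : V × V => ¬(a ≠ e.1 ∧ a ≠ e.2 ∧ b ≠ e.1 ∧ b ≠ e.2)).card
      = G.degree a + G.degree b + (G.degree a - 1) + (G.degree b - 1) := by
  classical
  have hne : a ≠ b := hab.ne
  set B1 : Finset (V × V) := (G.neighborFinset a).image (fun y => (a, y)) with hB1
  set B2 : Finset (V × V) := (G.neighborFinset b).image (fun y => (b, y)) with hB2
  set B3 : Finset (V × V) := ((G.neighborFinset a).erase b).image (fun x => (x, a)) with hB3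
  set B4 : Finset (V × V) := ((G.neighborFinset b).erase a).image (fun x => (x, b)) with hB4
  have hsplit : ((Finset.univ.filter fun e : V × V => G.Adj e.1 e.2).filter
        fun e : V × V => ¬(a ≠ e.1 ∧ a ≠ e.2 ∧ b ≠ e.1 ∧ b ≠ e.2))
      = B1 ∪ B2 ∪ (B3 ∪ B4) := by
    ext ⟨x, y⟩
    simp only [Finset.mem_filter, Finset.mem_univ, true_and, Finset.mem_union, hB1, hB2, hB3,
      hB4, Finset.mem_image, Finset.mem_erase, SimpleGraph.mem_neighborFinset, Prod.mk.injEq]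
    constructor
    · rintro ⟨hxy, hbad⟩
      push_neg at hbad
      by_cases h1 : x = a
      · subst h1; exact Or.inl (Or.inl ⟨y, hxy, rfl, rfl⟩)
      by_cases h2 : x = b
      · subst h2; exact Or.inl (Or.inr ⟨y, hxy, rfl, rfl⟩)
      by_cases h3 : y = a
      · subst h3
        exact Or.inr (Or.inl ⟨x, ⟨h2, hxy.symm⟩, rfl, rfl⟩)
      have h4 : y = b := by tauto
      subst h4
      exact Or.inr (Or.inr ⟨x, ⟨h1, hxy.symm⟩, rfl, rfl⟩)
    · rintro ((⟨y', hy', rfl, rfl⟩ | ⟨y', hy', rfl, rfl⟩) |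
        (⟨x', ⟨hx'b, hx'⟩, rfl, rfl⟩ | ⟨x', ⟨hx'a, hx'⟩, rfl, rfl⟩))
      · exact ⟨hy', by tauto⟩
      · exact ⟨hy', by tauto⟩
      · exact ⟨hx'.symm, by tauto⟩
      · exact ⟨hx'.symm, by tauto⟩
  have inj1 : Function.Injective (fun y : V => (a, y)) := fun p q h => (Prod.mk.injEq .. ▸ h).2
  have inj2 : Function.Injective (fun y : V => (b, y)) := fun p q h => (Prod.mk.injEq .. ▸ h).2
  have inj3 : Function.Injective (fun x : V => (x, a)) := fun p q h => (Prod.mk.injEq .. ▸ h).1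
  have inj4 : Function.Injective (fun x : V => (x, b)) := fun p q h => (Prod.mk.injEq .. ▸ h).1
  have c1 : B1.card = G.degree a := by rw [hB1, Finset.card_image_of_injective _ inj1]; rfl
  have c2 : B2.card = G.degree b := by rw [hB2, Finset.card_image_of_injective _ inj2]; rfl
  have c3 : B3.card = G.degree a - 1 := by
    rw [hB3, Finset.card_image_of_injective _ inj3,
      Finset.card_erase_of_mem (by rw [SimpleGraph.mem_neighborFinset]; exact hab)]
    rfl
  have c4 : B4.card = G.degree b - 1 := by
    rw [hB4, Finset.card_image_of_injective _ inj4,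
      Finset.card_erase_of_mem (by rw [SimpleGraph.mem_neighborFinset]; exact hab.symm)]
    rfl
  have d12 : Disjoint B1 B2 := by
    rw [Finset.disjoint_left]
    rintro ⟨x, y⟩ h1 h2
    simp only [hB1, hB2, Finset.mem_image, Prod.mk.injEq] at h1 h2
    obtain ⟨-, -, rfl, -⟩ := h1
    obtain ⟨-, -, e, -⟩ := h2
    exact hne e.symm
  have d34 : Disjoint B3 B4 := by
    rw [Finset.disjoint_left]
    rintro ⟨x, y⟩ h1 h2
    simp only [hB3, hB4, Finset.mem_image, Prod.mk.injEq] at h1 h2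
    obtain ⟨-, -, -, rfl⟩ := h1
    obtain ⟨-, -, -, e⟩ := h2
    exact hne e.symm
  have d1234 : Disjoint (B1 ∪ B2) (B3 ∪ B4) := by
    rw [Finset.disjoint_left]
    rintro ⟨x, y⟩ h1 h2
    simp only [hB1, hB2, hB3, hB4, Finset.mem_union, Finset.mem_image, Finset.mem_erase,
      SimpleGraph.mem_neighborFinset, Prod.mk.injEq] at h1 h2
    rcases h1 with ⟨y', hy', e1, e2⟩ | ⟨y', hy', e1, e2⟩ <;>
      rcases h2 with ⟨x', ⟨hxne, hx'⟩, e3, e4⟩ | ⟨x', ⟨hxne, hx'⟩, e3, e4⟩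
    · exact G.irrefl (by rw [e2, ← e4] at hy'; exact hy')
    · exact hxne (e3.trans e1.symm)
    · exact hxne (e3.trans e1.symm)
    · exact G.irrefl (by rw [e2, ← e4] at hy'; exact hy')
  rw [hsplit, Finset.card_union_of_disjoint d1234, Finset.card_union_of_disjoint d12,
    Finset.card_union_of_disjoint d34, c1, c2, c3, c4]
  omega

lemma neighbor_filter' (G : SimpleGraph V) [DecidableRel G.Adj] (b : V) :
    Finset.univ.filter (fun a => G.Adj a b) = G.neighborFinset b := by
  ext a; simp [SimpleGraph.mem_neighborFinset, G.adj_comm]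

lemma A_card (G : SimpleGraph V) [DecidableRel G.Adj] :
    ((Finset.univ.filter fun t : (V × V) × V × V =>
        G.Adj t.1.1 t.1.2 ∧ G.Adj t.2.1 t.2.2 ∧
          (t.1.1 ≠ t.2.1 ∧ t.1.1 ≠ t.2.2 ∧ t.1.2 ≠ t.2.1 ∧ t.1.2 ≠ t.2.2)).card : ℚ)
      = 8 * ((G.edgeFinset.card.choose 2 : ℚ) - ∑ v : V, ((G.degree v).choose 2 : ℚ)) := by
  classical
  set E : Finset (V × V) := Finset.univ.filter fun e : V × V => G.Adj e.1 e.2 with hE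
  set M : ℕ := G.edgeFinset.card with hM
  have hEcard : E.card = 2 * M := E_card G
  have hsplit : (Finset.univ.filter fun t : (V × V) × V × V =>
        G.Adj t.1.1 t.1.2 ∧ G.Adj t.2.1 t.2.2 ∧
          (t.1.1 ≠ t.2.1 ∧ t.1.1 ≠ t.2.2 ∧ t.1.2 ≠ t.2.1 ∧ t.1.2 ≠ t.2.2))
      = (E ×ˢ E).filter fun t : (V × V) × V × V =>
          t.1.1 ≠ t.2.1 ∧ t.1.1 ≠ t.2.2 ∧ t.1.2 ≠ t.2.1 ∧ t.1.2 ≠ t.2.2 := by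
    ext ⟨⟨a, b⟩, c, d⟩
    simp only [Finset.mem_filter, Finset.mem_univ, true_and, Finset.mem_product, hE]
    tauto
  rw [hsplit, Finset.card_filter, Finset.sum_product]
  have inner : ∀ e1 ∈ E,
      (∑ e2 ∈ E, if e1.1 ≠ e2.1 ∧ e1.1 ≠ e2.2 ∧ e1.2 ≠ e2.1 ∧ e1.2 ≠ e2.2 then (1:ℕ) else 0)
      = (E.filter fun e2 : V × V =>
          e1.1 ≠ e2.1 ∧ e1.1 ≠ e2.2 ∧ e1.2 ≠ e2.1 ∧ e1.2 ≠ e2.2).card := by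
    intro e1 _
    rw [Finset.card_filter]
  rw [Finset.sum_congr rfl inner]
  push_cast
  have key1 : ∀ e1 ∈ E,
      ((E.filter fun e2 : V × V =>
          e1.1 ≠ e2.1 ∧ e1.1 ≠ e2.2 ∧ e1.2 ≠ e2.1 ∧ e1.2 ≠ e2.2).card : ℚ)
      = 2 * M + 2 - 2 * G.degree e1.1 - 2 * G.degree e1.2 := by
    rintro ⟨a, b⟩ he1
    rw [hE, Finset.mem_filter] at he1
    have hadj : G.Adj a b := he1.2
    have hdega : 1 ≤ G.degree a := by
      rw [← SimpleGraph.card_neighborFinset_eq_degree]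
      exact Finset.card_pos.mpr ⟨b, by rw [SimpleGraph.mem_neighborFinset]; exact hadj⟩
    have hdegb : 1 ≤ G.degree b := by
      rw [← SimpleGraph.card_neighborFinset_eq_degree]
      exact Finset.card_pos.mpr ⟨a, by rw [SimpleGraph.mem_neighborFinset]; exact hadj.symm⟩
    have hcompl := Finset.card_filter_add_card_filter_not
      (s := E) (p := fun e2 : V × V => a ≠ e2.1 ∧ a ≠ e2.2 ∧ b ≠ e2.1 ∧ b ≠ e2.2)
    have hbad := bad_card G hadj
    rw [← hE] at hbad
    have : ((E.filter fun e2 : V × V => a ≠ e2.1 ∧ a ≠ e2.2 ∧ b ≠ e2.1 ∧ b ≠ e2.2).card : ℚ)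
        + ((G.degree a : ℚ) + G.degree b + ((G.degree a : ℚ) - 1) + ((G.degree b : ℚ) - 1))
        = 2 * M := by
      have hq := congrArg (fun k : ℕ => (k : ℚ)) (hcompl.trans hEcard)
      push_cast at hq
      rw [← hq, hbad]
      push_cast [Nat.cast_sub hdega, Nat.cast_sub hdegb]
      ring
    have := sub_eq_of_eq_add' (by linarith : (2 * (M:ℚ)) =
      ((G.degree a : ℚ) + G.degree b + ((G.degree a : ℚ) - 1) + ((G.degree b : ℚ) - 1))
        + (E.filter fun e2 : V × V => a ≠ e2.1 ∧ a ≠ e2.2 ∧ b ≠ e2.1 ∧ b ≠ e2.2).card)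
    simp only []
    linarith [this]
  rw [Finset.sum_congr rfl (fun e1 he1 => key1 e1 he1)]
  have sdeg1 : (∑ e1 ∈ E, (G.degree e1.1 : ℚ)) = ∑ v : V, (G.degree v : ℚ)^2 := by
    rw [hE, Finset.sum_filter, Fintype.sum_prod_type]
    refine Finset.sum_congr rfl fun a _ => ?_
    dsimp only
    change ∑ x : V, (if G.Adj a x then (G.degree a : ℚ) else 0) = _
    rw [← Finset.sum_filter, Finset.sum_const, neighbor_filter, nsmul_eq_mul,
      SimpleGraph.card_neighborFinset_eq_degree, sq]
  have sdeg2 : (∑ e1 ∈ E, (G.degree e1.2 : ℚ)) = ∑ v : V, (G.degree v : ℚ)^2 := by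
    rw [hE, Finset.sum_filter, Fintype.sum_prod_type, Finset.sum_comm]
    refine Finset.sum_congr rfl fun b _ => ?_
    dsimp only
    change ∑ x : V, (if G.Adj x b then (G.degree b : ℚ) else 0) = _
    rw [← Finset.sum_filter, Finset.sum_const, neighbor_filter', nsmul_eq_mul,
      SimpleGraph.card_neighborFinset_eq_degree, sq]
  have hsum : (∑ v : V, (G.degree v : ℚ)) = 2 * M := by
    rw [hM]
    exact_mod_cast congrArg (fun k : ℕ => (k : ℚ)) (G.sum_degrees_eq_twice_card_edges)
  have hchoose : ∀ k : ℕ, ((k.choose 2 : ℕ) : ℚ) = k * (k - 1) / 2 := fun k =>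
    Nat.cast_choose_two ℚ k
  rw [Finset.sum_sub_distrib, Finset.sum_sub_distrib, Finset.sum_const, nsmul_eq_mul,
    ← Finset.mul_sum, ← Finset.mul_sum, sdeg1, sdeg2, hEcard, hchoose M]
  rw [show (∑ v : V, ((G.degree v).choose 2 : ℚ))
      = ((∑ v : V, (G.degree v : ℚ)^2) - ∑ v : V, (G.degree v : ℚ)) / 2 by
    rw [Finset.sum_congr rfl (fun v _ => hchoose (G.degree v)), ← Finset.sum_div,
      ← Finset.sum_sub_distrib]
    congr 1
    refine Finset.sum_congr rfl fun v _ => by ring]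
  rw [hsum]
  push_cast
  ring
end counting_aux

/-- the average, over all bijections `σ : V → W`, of the crossing number of
the induced drawing of `G` in a rectilinear drawing `f` of the complete graph on `W`. -/
theorem stmt5 {V W : Type*} [Fintype V] [Fintype W] [DecidableEq V] [DecidableEq W]
    (n : ℕ) (hn : 4 ≤ n) (hV : Fintype.card V = n) (hW : Fintype.card W = n)
    (G : SimpleGraph V) [DecidableRel G.Adj]
    (f : W → ℝ × ℝ) (hf : IsRectilinearDrawing f) :
    (∑ σ : V ≃ W, (crossingNumber G (fun v => f (σ v)) : ℚ)) / (n.factorial : ℚ)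
      = (crossingNumber (⊤ : SimpleGraph W) f : ℚ) / (3 * (n.choose 4 : ℚ)) *
          ((G.edgeFinset.card.choose 2 : ℚ) - ∑ v : V, ((G.degree v).choose 2 : ℚ)) := by
  classical
  have hcard : Fintype.card V = Fintype.card W := by rw [hV, hW]
  set A : Finset ((V × V) × V × V) := Finset.univ.filter fun t : (V × V) × V × V =>
      G.Adj t.1.1 t.1.2 ∧ G.Adj t.2.1 t.2.2 ∧
        (t.1.1 ≠ t.2.1 ∧ t.1.1 ≠ t.2.2 ∧ t.1.2 ≠ t.2.1 ∧ t.1.2 ≠ t.2.2) with hA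
  have step1 : ∀ σ : V ≃ W, 8 * crossingNumber G (fun v => f (σ v))
      = ∑ t ∈ A, if SegX (f (σ t.1.1)) (f (σ t.1.2)) (f (σ t.2.1)) (f (σ t.2.2))
          then (1:ℕ) else 0 := by
    intro σ
    rw [← eight_mul_cr G (fun v => f (σ v)), ← Finset.card_filter, hA,
      Finset.filter_filter]
    refine filter_card_congr fun t => ?_
    rw [edgesCross_mk']
    tauto
  have step2 : 8 * ∑ σ : V ≃ W, crossingNumber G (fun v => f (σ v))
      = A.card * (Nat.factorial (n - 4) * (8 * crossingNumber (⊤ : SimpleGraph W) f)) := by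
    rw [Finset.mul_sum]
    rw [Finset.sum_congr rfl fun σ _ => step1 σ]
    rw [Finset.sum_comm]
    have inner : ∀ t ∈ A, (∑ σ : V ≃ W,
        if SegX (f (σ t.1.1)) (f (σ t.1.2)) (f (σ t.2.1)) (f (σ t.2.2)) then (1:ℕ) else 0)
        = Nat.factorial (n - 4) * (8 * crossingNumber (⊤ : SimpleGraph W) f) := by
      intro t ht
      rw [hA, Finset.mem_filter] at ht
      obtain ⟨-, h1, h2, h3, h4, h5, h6⟩ := ht
      rw [sum_regroup hcard h1.ne h3 h4 h5 h6 h2.ne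
        (fun x y z w => SegX (f x) (f y) (f z) (f w)), hV]
      rw [← eight_mul_cr (⊤ : SimpleGraph W) f]
      refine congrArg _ (filter_card_congr fun q => ?_)
      simp only [edgesCross_mk', SimpleGraph.top_adj]
      tauto
    rw [Finset.sum_congr rfl inner, Finset.sum_const, smul_eq_mul]
  have hAq : (A.card : ℚ) = 8 * ((G.edgeFinset.card.choose 2 : ℚ)
      - ∑ v : V, ((G.degree v).choose 2 : ℚ)) := by
    rw [hA]
    exact A_card G
  have main : (∑ σ : V ≃ W, (crossingNumber G (fun v => f (σ v)) : ℚ))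
      = (A.card : ℚ) * (Nat.factorial (n - 4) : ℚ)
          * (crossingNumber (⊤ : SimpleGraph W) f : ℚ) := by
    apply mul_left_cancel₀ (by norm_num : (8:ℚ) ≠ 0)
    have := congrArg (fun k : ℕ => (k : ℚ)) step2
    push_cast at this
    rw [this]
    ring
  have hfact : (n.factorial : ℚ)
      = (n.choose 4 : ℚ) * 24 * (Nat.factorial (n - 4) : ℚ) := by
    have h24 : Nat.factorial 4 = 24 := rfl
    have := Nat.choose_mul_factorial_mul_factorial hn
    rw [h24] at this
    exact_mod_cast (congrArg (fun k : ℕ => (k : ℚ)) this).symm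
  have hC : ((n.choose 4 : ℕ) : ℚ) ≠ 0 := by
    exact_mod_cast (Nat.choose_pos hn).ne'
  have hF : ((Nat.factorial (n - 4) : ℕ) : ℚ) ≠ 0 := by
    exact_mod_cast (Nat.factorial_pos (n - 4)).ne'
  rw [main, hAq, hfact]
  field_simp
  ring
end

section
/- Let n ≥ 4 and let G be any simple graph on n vertices, with m edges and degree function d. Then rcr(G) ≤ (rcr(K_n) / (3·C(n,4))) · ( C(m,2) − Σ_{v∈V(G)} C(d(v),2) ), where rcr denotes the rectilinear crossing number. -/
open Finset
set_option linter.unusedSectionVars false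

section Stmt6Aux

variable {V : Type*}

/-- filter over univ with classical decidability -/
noncomputable def cFilter {α : Type*} [Fintype α] (P : α → Prop) : Finset α :=
  @Finset.filter α P (Classical.decPred P) Finset.univ

lemma mem_cFilter {α : Type*} [Fintype α] {P : α → Prop} {x : α} :
    x ∈ cFilter P ↔ P x := by
  simp [cFilter, Finset.mem_filter]

lemma collinear_of_mem_openSegment {x y z : ℝ × ℝ} (h : x ∈ openSegment ℝ y z) :
    Collinear ℝ ({x, y, z} : Set (ℝ × ℝ)) := by
  have hx : x ∈ segment ℝ y z := openSegment_subset_segment ℝ y z h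
  rw [segment_eq_image_lineMap] at hx
  obtain ⟨t, -, rfl⟩ := hx
  exact collinear_insert_of_mem_affineSpan_pair (AffineMap.lineMap_mem_affineSpan_pair _ _ _)

/-- moment curve drawing -/
lemma exists_rectilinear_drawing [Fintype V] : ∃ f : V → ℝ × ℝ, IsRectilinearDrawing f := by
  classical
  set x : V → ℝ := fun v => ((Fintype.equivFin V v : ℕ) : ℝ) with hxdef
  have hxinj : Function.Injective x := by
    intro a b hab
    have h' : ((Fintype.equivFin V a : ℕ) : ℝ) = ((Fintype.equivFin V b : ℕ) : ℝ) := hab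
    have : (Fintype.equivFin V a : ℕ) = (Fintype.equivFin V b : ℕ) := by exact_mod_cast h'
    exact (Fintype.equivFin V).injective (Fin.val_injective this)
  refine ⟨fun v => (x v, x v ^ 2), ?_, ?_⟩
  · intro a b hab
    exact hxinj (congrArg Prod.fst hab)
  · intro a b c hab hac hbc hcol
    have h1 : (x a, x a ^ 2) ∈ ({(x a, x a ^ 2), (x b, x b ^ 2), (x c, x c ^ 2)} : Set (ℝ × ℝ)) :=
      Set.mem_insert _ _
    rw [collinear_iff_of_mem h1] at hcol
    obtain ⟨v, hv⟩ := hcol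
    obtain ⟨t, ht⟩ := hv _ (by simp : (x b, x b ^ 2) ∈ _)
    obtain ⟨s, hs⟩ := hv _ (by simp : (x c, x c ^ 2) ∈ _)
    have ht1 : x b = t * v.1 + x a := congrArg Prod.fst ht
    have ht2 : x b ^ 2 = t * v.2 + x a ^ 2 := congrArg Prod.snd ht
    have hs1 : x c = s * v.1 + x a := congrArg Prod.fst hs
    have hs2 : x c ^ 2 = s * v.2 + x a ^ 2 := congrArg Prod.snd hs
    have hba : x b - x a ≠ 0 := sub_ne_zero.mpr (fun h => hab (hxinj h.symm))
    have hca : x c - x a ≠ 0 := sub_ne_zero.mpr (fun h => hac (hxinj h.symm))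
    have hcb : x c - x b ≠ 0 := sub_ne_zero.mpr (fun h => hbc (hxinj ((sub_eq_zero.mp (by linarith [sub_eq_zero.mpr h])).symm)))
    have key : (x b - x a) * (x c - x a) * (x c - x b) = 0 := by
      linear_combination (s * v.2) * ht1 - (x c - x a) * ht2 - (t * v.2) * hs1 + (x b - x a) * hs2
    exact (mul_ne_zero (mul_ne_zero hba hca) hcb) key

end Stmt6Aux

section Transfer

variable {V : Type*}

lemma isRectilinearDrawing_comp {f : V → ℝ × ℝ} (hf : IsRectilinearDrawing f) (σ : Equiv.Perm V) :
    IsRectilinearDrawing (f ∘ σ) := by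
  refine ⟨hf.1.comp σ.injective, ?_⟩
  intro a b c hab hac hbc
  exact hf.2 (σ a) (σ b) (σ c) (fun h => hab (σ.injective h)) (fun h => hac (σ.injective h))
    (fun h => hbc (σ.injective h))

lemma edgeSeg_comp (f : V → ℝ × ℝ) (σ : V → V) (e : Sym2 V) :
    edgeSeg (f ∘ σ) e = edgeSeg f (e.map σ) := by
  induction e using Sym2.ind with
  | _ x y => rfl

lemma edgesCross_comp (f : V → ℝ × ℝ) (σ : Equiv.Perm V) (e₁ e₂ : Sym2 V) :
    EdgesCross (f ∘ σ) e₁ e₂ ↔ EdgesCross f (e₁.map σ) (e₂.map σ) := by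
  unfold EdgesCross
  rw [edgeSeg_comp, edgeSeg_comp]
  constructor
  · rintro ⟨hd, hn⟩
    refine ⟨?_, hn⟩
    intro v hv hv'
    rw [Sym2.mem_map] at hv hv'
    obtain ⟨a, ha, rfl⟩ := hv
    obtain ⟨b, hb, hba⟩ := hv'
    exact hd a ha (by rwa [σ.injective hba] at hb)
  · rintro ⟨hd, hn⟩
    refine ⟨?_, hn⟩
    intro v hv hv'
    exact hd (σ v) (Sym2.mem_map.mpr ⟨v, hv, rfl⟩) (Sym2.mem_map.mpr ⟨v, hv', rfl⟩)

lemma not_isDiag_of_edgesCross {f : V → ℝ × ℝ} (hf : IsRectilinearDrawing f)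
    {e₁ e₂ : Sym2 V} (h : EdgesCross f e₁ e₂) : ¬ e₁.IsDiag := by
  induction e₁ using Sym2.ind with
  | _ a a' =>
  rw [Sym2.mk_isDiag_iff]
  rintro rfl
  induction e₂ using Sym2.ind with
  | _ c d =>
  obtain ⟨hd, z, hz1, hz2⟩ := h
  have hza : z = f a := by
    have : edgeSeg f s(a, a) = openSegment ℝ (f a) (f a) := rfl
    rw [this, openSegment_same] at hz1
    exact hz1
  subst hza
  have hac : a ≠ c := fun h => hd a (by simp) (by simp [h])
  have had : a ≠ d := fun h => hd a (by simp) (by simp [h])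
  by_cases hcd : c = d
  · subst hcd
    have : f a ∈ openSegment ℝ (f c) (f c) := hz2
    rw [openSegment_same] at this
    exact hac (hf.1 this)
  · exact hf.2 a c d hac had hcd (collinear_of_mem_openSegment hz2)

lemma edgesCross_nondiag {f : V → ℝ × ℝ} (hf : IsRectilinearDrawing f)
    {e₁ e₂ : Sym2 V} (h : EdgesCross f e₁ e₂) : ¬ e₁.IsDiag ∧ ¬ e₂.IsDiag :=
  ⟨not_isDiag_of_edgesCross hf h, not_isDiag_of_edgesCross hf (edgesCross_symm f h)⟩

lemma crossingNumber_eq_card [Fintype V] (G : SimpleGraph V) (f : V → ℝ × ℝ) :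
    crossingNumber G f =
      (cFilter (fun p : Sym2 (Sym2 V) =>
        (∀ e ∈ p, e ∈ G.edgeSet) ∧ p ∈ Sym2.fromRel (r := EdgesCross f) ⟨fun _ _ h => edgesCross_symm f h⟩)).card := by
  rw [crossingNumber, ← Set.ncard_coe_finset]
  congr 1
  ext p
  simp [mem_cFilter]

lemma rcr_le_crossingNumber {G : SimpleGraph V} {f : V → ℝ × ℝ}
    (hf : IsRectilinearDrawing f) : rcr G ≤ crossingNumber G f :=
  Nat.sInf_le ⟨f, hf, rfl⟩

lemma exists_optimal_drawing [Fintype V] (G : SimpleGraph V) :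
    ∃ f : V → ℝ × ℝ, IsRectilinearDrawing f ∧ crossingNumber G f = rcr G := by
  have hne : {k | ∃ f : V → ℝ × ℝ, IsRectilinearDrawing f ∧ crossingNumber G f = k}.Nonempty := by
    obtain ⟨f, hf⟩ := exists_rectilinear_drawing (V := V)
    exact ⟨crossingNumber G f, f, hf, rfl⟩
  exact Nat.sInf_mem hne

end Transfer

section Pairs

variable {V : Type*}

lemma disjRel_symm : Symmetric (fun e₁ e₂ : Sym2 V => ∀ v ∈ e₁, v ∉ e₂) :=
  fun _ _ h v hv hv' => h v hv' hv

lemma sym2_eq_of_two_mem {e : Sym2 V} {v w : V} (hvw : v ≠ w) (hv : v ∈ e) (hw : w ∈ e) :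
    e = s(v, w) := by
  induction e using Sym2.ind with
  | _ a b =>
    rw [Sym2.mem_iff] at hv hw
    rcases hv with rfl | rfl <;> rcases hw with rfl | rfl
    · exact absurd rfl hvw
    · rfl
    · exact Sym2.eq_swap
    · exact absurd rfl hvw

lemma shared_vertex_unique {e₁ e₂ : Sym2 V} (hne : e₁ ≠ e₂) {v w : V}
    (hv1 : v ∈ e₁) (hv2 : v ∈ e₂) (hw1 : w ∈ e₁) (hw2 : w ∈ e₂) : v = w := by
  by_contra hvw
  exact hne ((sym2_eq_of_two_mem hvw hv1 hw1).trans (sym2_eq_of_two_mem hvw hv2 hw2).symm)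

/-- The unordered pair of edges, as a finset. -/
def pairToFinset [DecidableEq V] : Sym2 (Sym2 V) → Finset (Sym2 V) :=
  Sym2.lift ⟨fun e₁ e₂ => {e₁, e₂}, fun e₁ e₂ => Finset.pair_comm e₁ e₂⟩

lemma mem_pairToFinset [DecidableEq V] {e : Sym2 V} {p : Sym2 (Sym2 V)} :
    e ∈ pairToFinset p ↔ e ∈ p := by
  induction p using Sym2.ind with
  | _ e₁ e₂ => simp [pairToFinset, Sym2.mem_iff]

lemma card_pairToFinset [DecidableEq V] {p : Sym2 (Sym2 V)} (hp : ¬ p.IsDiag) :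
    (pairToFinset p).card = 2 := by
  induction p using Sym2.ind with
  | _ e₁ e₂ =>
    rw [Sym2.mk_isDiag_iff] at hp
    exact Finset.card_pair hp

lemma pairToFinset_inj [DecidableEq V] {p q : Sym2 (Sym2 V)} (hp : ¬ p.IsDiag)
    (h : pairToFinset p = pairToFinset q) : p = q := by
  induction p using Sym2.ind with
  | _ a b =>
  induction q using Sym2.ind with
  | _ c d =>
  rw [Sym2.mk_isDiag_iff] at hp
  have ha : a = c ∨ a = d := by
    have : a ∈ pairToFinset s(c, d) := h ▸ (mem_pairToFinset.mpr (by simp))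
    simpa [pairToFinset] using this
  have hb : b = c ∨ b = d := by
    have : b ∈ pairToFinset s(c, d) := h ▸ (mem_pairToFinset.mpr (by simp))
    simpa [pairToFinset] using this
  have hc : c = a ∨ c = b := by
    have : c ∈ pairToFinset s(a, b) := h ▸ (mem_pairToFinset.mpr (by simp))
    simpa [pairToFinset] using this
  rcases ha with rfl | rfl <;> rcases hb with rfl | rfl
  · exact absurd rfl hp
  · rfl
  · exact Sym2.eq_swap
  · rcases hc with rfl | rfl <;> exact absurd rfl hp

variable [Fintype V] [DecidableEq V]

/-- All unordered pairs of distinct edges of `G`. -/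
noncomputable def allPairs (G : SimpleGraph V) : Finset (Sym2 (Sym2 V)) :=
  cFilter (fun p : Sym2 (Sym2 V) => (∀ e ∈ p, e ∈ G.edgeSet) ∧ ¬ p.IsDiag)

/-- All unordered pairs of vertex-disjoint edges of `G`. -/
noncomputable def disjPairs (G : SimpleGraph V) : Finset (Sym2 (Sym2 V)) :=
  cFilter (fun p : Sym2 (Sym2 V) =>
    (∀ e ∈ p, e ∈ G.edgeSet) ∧ p ∈ Sym2.fromRel (r := fun e₁ e₂ : Sym2 V => ∀ v ∈ e₁, v ∉ e₂) ⟨fun _ _ h => disjRel_symm h⟩)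

lemma disjPairs_subset_allPairs (G : SimpleGraph V) : disjPairs G ⊆ allPairs G := by
  intro p hp
  rw [disjPairs, mem_cFilter] at hp
  rw [allPairs, mem_cFilter]
  refine ⟨hp.1, ?_⟩
  induction p using Sym2.ind with
  | _ e₁ e₂ =>
    rw [Sym2.mk_isDiag_iff]
    rintro rfl
    have hd := Sym2.fromRel_prop.mp hp.2
    induction e₁ using Sym2.ind with
    | _ x y => exact hd x (by simp) (by simp)

lemma disjPairs_mono {G H : SimpleGraph V} (h : G ≤ H) : disjPairs G ⊆ disjPairs H := by
  intro p hp
  rw [disjPairs, mem_cFilter] at hp ⊢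
  exact ⟨fun e he => SimpleGraph.edgeSet_mono h (hp.1 e he), hp.2⟩

lemma card_allPairs (G : SimpleGraph V) [DecidableRel G.Adj] :
    (allPairs G).card = (G.edgeFinset.card).choose 2 := by
  rw [← Finset.card_powersetCard]
  refine Finset.card_bij (fun p _ => pairToFinset p) ?_ ?_ ?_
  · intro p hp
    rw [allPairs, mem_cFilter] at hp
    rw [Finset.mem_powersetCard]
    exact ⟨fun e he => SimpleGraph.mem_edgeFinset.mpr (hp.1 e (mem_pairToFinset.mp he)),
      card_pairToFinset hp.2⟩
  · intro p hp q hq h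
    rw [allPairs, mem_cFilter] at hp
    exact pairToFinset_inj hp.2 h
  · intro t ht
    rw [Finset.mem_powersetCard] at ht
    obtain ⟨e₁, e₂, hne, rfl⟩ := Finset.card_eq_two.mp ht.2
    refine ⟨s(e₁, e₂), ?_, by simp [pairToFinset]⟩
    rw [allPairs, mem_cFilter]
    constructor
    · intro e he
      rw [Sym2.mem_iff] at he
      rcases he with rfl | rfl
      · exact SimpleGraph.mem_edgeFinset.mp (ht.1 (by simp))
      · exact SimpleGraph.mem_edgeFinset.mp (ht.1 (by simp))
    · rw [Sym2.mk_isDiag_iff]; exact hne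

end Pairs

section Share

variable {V : Type*} [Fintype V] [DecidableEq V]

lemma card_sharePairs (G : SimpleGraph V) [DecidableRel G.Adj] [Nonempty V] :
    (allPairs G \ disjPairs G).card = ∑ v : V, (G.degree v).choose 2 := by
  classical
  set sh : Sym2 (Sym2 V) → V := fun p =>
    if h : ∃ v, ∀ e ∈ p, v ∈ e then h.choose else Classical.arbitrary V with hshdef
  have hsh : ∀ p : Sym2 (Sym2 V), (∃ v, ∀ e ∈ p, v ∈ e) → ∀ e ∈ p, sh p ∈ e := by
    intro p h
    rw [hshdef]
    simp only [dif_pos h]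
    exact h.choose_spec
  -- common-vertex existence for members of the sdiff
  have hmem : ∀ p ∈ allPairs G \ disjPairs G,
      (∀ e ∈ p, e ∈ G.edgeSet) ∧ ¬ p.IsDiag ∧ (∃ v, ∀ e ∈ p, v ∈ e) := by
    intro p hp
    rw [Finset.mem_sdiff, allPairs, mem_cFilter, disjPairs, mem_cFilter] at hp
    obtain ⟨⟨hedge, hdiag⟩, hnd⟩ := hp
    refine ⟨hedge, hdiag, ?_⟩
    rw [not_and] at hnd
    have hnd' := hnd hedge
    induction p using Sym2.ind with
    | _ e₁ e₂ =>
      rw [Sym2.fromRel_prop] at hnd'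
      push_neg at hnd'
      obtain ⟨v, hv1, hv2⟩ := hnd'
      refine ⟨v, ?_⟩
      intro e he
      rw [Sym2.mem_iff] at he
      rcases he with rfl | rfl <;> assumption
  rw [Finset.card_eq_sum_card_fiberwise (f := sh) (t := Finset.univ)
    (fun x _ => Finset.mem_univ _)]
  refine Finset.sum_congr rfl ?_
  intro v _
  rw [← SimpleGraph.card_incidenceFinset_eq_degree, ← Finset.card_powersetCard]
  refine Finset.card_bij (fun p _ => pairToFinset p) ?_ ?_ ?_
  · intro p hp
    rw [Finset.mem_filter] at hp
    obtain ⟨hp1, hp2⟩ := hp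
    obtain ⟨hedge, hdiag, hex⟩ := hmem p hp1
    rw [Finset.mem_powersetCard]
    refine ⟨?_, card_pairToFinset hdiag⟩
    intro e he
    rw [mem_pairToFinset] at he
    rw [SimpleGraph.mem_incidenceFinset]
    exact ⟨hedge e he, hp2 ▸ hsh p hex e he⟩
  · intro p hp q hq h
    rw [Finset.mem_filter] at hp
    exact pairToFinset_inj (hmem p hp.1).2.1 h
  · intro t ht
    rw [Finset.mem_powersetCard] at ht
    obtain ⟨e₁, e₂, hne, rfl⟩ := Finset.card_eq_two.mp ht.2
    have h1 : e₁ ∈ G.incidenceSet v := (SimpleGraph.mem_incidenceFinset _ _ _).mp (ht.1 (by simp))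
    have h2 : e₂ ∈ G.incidenceSet v := (SimpleGraph.mem_incidenceFinset _ _ _).mp (ht.1 (by simp))
    have hAll : ∀ e ∈ s(e₁, e₂), e ∈ G.edgeSet ∧ v ∈ e := by
      intro e he
      rw [Sym2.mem_iff] at he
      rcases he with rfl | rfl
      exacts [⟨h1.1, h1.2⟩, ⟨h2.1, h2.2⟩]
    have hexv : ∃ w, ∀ e ∈ s(e₁, e₂), w ∈ e := ⟨v, fun e he => (hAll e he).2⟩
    have hshv : sh s(e₁, e₂) = v := by
      have hs1 : sh s(e₁, e₂) ∈ e₁ := hsh _ hexv e₁ (by simp)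
      have hs2 : sh s(e₁, e₂) ∈ e₂ := hsh _ hexv e₂ (by simp)
      exact shared_vertex_unique hne hs1 hs2 h1.2 h2.2
    refine ⟨s(e₁, e₂), ?_, by simp [pairToFinset]⟩
    rw [Finset.mem_filter]
    refine ⟨?_, hshv⟩
    rw [Finset.mem_sdiff, allPairs, mem_cFilter, disjPairs, mem_cFilter]
    refine ⟨⟨fun e he => (hAll e he).1, by rw [Sym2.mk_isDiag_iff]; exact hne⟩, ?_⟩
    rintro ⟨-, hd⟩
    rw [Sym2.fromRel_prop] at hd
    exact hd v h1.2 h2.2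

lemma card_disjPairs_add (G : SimpleGraph V) [DecidableRel G.Adj] [Nonempty V] :
    (disjPairs G).card + ∑ v : V, (G.degree v).choose 2 = (G.edgeFinset.card).choose 2 := by
  rw [← card_allPairs G, ← card_sharePairs G]
  have := Finset.card_sdiff_add_card_eq_card (disjPairs_subset_allPairs G)
  omega

end Share

section Perms

variable {V : Type*} [Fintype V] [DecidableEq V]

/-- The crossing pairs of a drawing, as a finset. -/
noncomputable def crossPairs (G : SimpleGraph V) (f : V → ℝ × ℝ) : Finset (Sym2 (Sym2 V)) :=
  cFilter (fun p : Sym2 (Sym2 V) =>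
    (∀ e ∈ p, e ∈ G.edgeSet) ∧ p ∈ Sym2.fromRel (r := EdgesCross f) ⟨fun _ _ h => edgesCross_symm f h⟩)

lemma crossingNumber_eq_card' (G : SimpleGraph V) (f : V → ℝ × ℝ) :
    crossingNumber G f = (crossPairs G f).card :=
  crossingNumber_eq_card G f

/-- The action of a permutation on unordered pairs of unordered pairs. -/
def permPair (σ : Equiv.Perm V) (p : Sym2 (Sym2 V)) : Sym2 (Sym2 V) :=
  Sym2.map (Sym2.map σ) p

lemma permPair_permPair (σ τ : Equiv.Perm V) (p : Sym2 (Sym2 V)) :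
    permPair σ (permPair τ p) = permPair (σ * τ) p := by
  unfold permPair
  rw [Sym2.map_map]
  congr 1
  funext e
  simp only [Function.comp_apply, Sym2.map_map]
  rfl

lemma permPair_inv (σ : Equiv.Perm V) (p : Sym2 (Sym2 V)) :
    permPair σ⁻¹ (permPair σ p) = p := by
  rw [permPair_permPair, inv_mul_cancel]
  unfold permPair
  simp [Sym2.map_id]

lemma sym2_map_isDiag (σ : Equiv.Perm V) (e : Sym2 V) :
    (Sym2.map (⇑σ) e).IsDiag ↔ e.IsDiag := by
  induction e using Sym2.ind with
  | _ x y => simp [Sym2.mk_isDiag_iff]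

lemma mem_crossPairs_comp {f₀ : V → ℝ × ℝ} (hf₀ : IsRectilinearDrawing f₀)
    (σ : Equiv.Perm V) (G : SimpleGraph V) (p : Sym2 (Sym2 V)) :
    p ∈ crossPairs G (f₀ ∘ σ) ↔
      (∀ e ∈ p, e ∈ G.edgeSet) ∧ permPair σ p ∈ crossPairs ⊤ f₀ := by
  rw [crossPairs, mem_cFilter, crossPairs, mem_cFilter]
  induction p using Sym2.ind with
  | _ e₁ e₂ =>
  unfold permPair
  rw [Sym2.map_pair_eq, Sym2.fromRel_prop, Sym2.fromRel_prop, edgesCross_comp f₀ σ e₁ e₂]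
  constructor
  · rintro ⟨he, hc⟩
    refine ⟨he, ?_, hc⟩
    intro e he'
    rw [Sym2.mem_iff] at he'
    rw [SimpleGraph.edgeSet_top, Set.mem_compl_iff, Sym2.mem_diagSet]
    rcases he' with rfl | rfl
    · exact not_isDiag_of_edgesCross hf₀ hc
    · exact not_isDiag_of_edgesCross hf₀ (edgesCross_symm f₀ hc)
  · rintro ⟨he, -, hc⟩
    exact ⟨he, hc⟩

lemma crossPairs_subset_disjPairs (G : SimpleGraph V) (f : V → ℝ × ℝ) :
    crossPairs G f ⊆ disjPairs G := by
  intro p hp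
  rw [crossPairs, mem_cFilter] at hp
  rw [disjPairs, mem_cFilter]
  refine ⟨hp.1, ?_⟩
  have h2 := hp.2
  induction p using Sym2.ind with
  | _ e₁ e₂ =>
    rw [Sym2.fromRel_prop] at h2 ⊢
    exact h2.1

lemma crossPairs_comp_eq {f₀ : V → ℝ × ℝ} (hf₀ : IsRectilinearDrawing f₀)
    (σ : Equiv.Perm V) (G : SimpleGraph V) :
    crossPairs G (f₀ ∘ σ) =
      (disjPairs G).filter (fun p => permPair σ p ∈ crossPairs ⊤ f₀) := by
  ext p
  rw [Finset.mem_filter, mem_crossPairs_comp hf₀ σ G p]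
  constructor
  · rintro ⟨he, hc⟩
    refine ⟨?_, hc⟩
    · have : p ∈ crossPairs G (f₀ ∘ σ) := (mem_crossPairs_comp hf₀ σ G p).mpr ⟨he, hc⟩
      exact crossPairs_subset_disjPairs G (f₀ ∘ σ) this
  · rintro ⟨hd, hc⟩
    rw [disjPairs, mem_cFilter] at hd
    exact ⟨hd.1, hc⟩

lemma crossingNumber_top_comp {f₀ : V → ℝ × ℝ} (hf₀ : IsRectilinearDrawing f₀)
    (σ : Equiv.Perm V) :
    crossingNumber ⊤ (f₀ ∘ σ) = crossingNumber (⊤ : SimpleGraph V) f₀ := by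
  rw [crossingNumber_eq_card', crossingNumber_eq_card']
  refine Finset.card_bij' (fun p _ => permPair σ p) (fun q _ => permPair σ⁻¹ q) ?_ ?_ ?_ ?_
  · intro p hp
    exact ((mem_crossPairs_comp hf₀ σ ⊤ p).mp hp).2
  · intro q hq
    rw [mem_crossPairs_comp hf₀ σ ⊤]
    constructor
    · intro e he
      rw [crossPairs, mem_cFilter] at hq
      rw [SimpleGraph.edgeSet_top, Set.mem_compl_iff, Sym2.mem_diagSet]
      unfold permPair at he
      rw [Sym2.mem_map] at he
      obtain ⟨e', he', rfl⟩ := he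
      have := hq.1 e' he'
      rw [SimpleGraph.edgeSet_top, Set.mem_compl_iff, Sym2.mem_diagSet] at this
      rwa [sym2_map_isDiag]
    · rw [permPair_permPair, mul_inv_cancel]
      unfold permPair
      simpa [Sym2.map_id] using hq
  · intro p _
    exact permPair_inv σ p
  · intro q _
    show permPair σ (permPair σ⁻¹ q) = q
    rw [permPair_permPair, mul_inv_cancel]
    unfold permPair
    simp [Sym2.map_id]

end Perms

section Ext

variable {V : Type*} [Fintype V] [DecidableEq V]

lemma exists_perm_four {a b c d x y u v : V}
    (hab : a ≠ b) (hac : a ≠ c) (had : a ≠ d) (hbc : b ≠ c) (hbd : b ≠ d) (hcd : c ≠ d)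
    (hxy : x ≠ y) (hxu : x ≠ u) (hxv : x ≠ v) (hyu : y ≠ u) (hyv : y ≠ v) (huv : u ≠ v) :
    ∃ τ : Equiv.Perm V, τ a = x ∧ τ b = y ∧ τ c = u ∧ τ d = v := by
  classical
  set s : Finset V := {a, b, c, d} with hs
  set t : Finset V := {x, y, u, v} with ht
  have hmx : x ∈ t := by simp [ht]
  have hmy : y ∈ t := by simp [ht]
  have hmu : u ∈ t := by simp [ht]
  have hmv : v ∈ t := by simp [ht]
  have hma : a ∈ s := by simp [hs]
  have hmb : b ∈ s := by simp [hs]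
  have hmc : c ∈ s := by simp [hs]
  have hmd : d ∈ s := by simp [hs]
  let F : {z // z ∈ s} → {z // z ∈ t} := fun z =>
    if z.1 = a then ⟨x, hmx⟩ else if z.1 = b then ⟨y, hmy⟩ else
      if z.1 = c then ⟨u, hmu⟩ else ⟨v, hmv⟩
  let Gf : {z // z ∈ t} → {z // z ∈ s} := fun z =>
    if z.1 = x then ⟨a, hma⟩ else if z.1 = y then ⟨b, hmb⟩ else
      if z.1 = u then ⟨c, hmc⟩ else ⟨d, hmd⟩
  have hF : ∀ z, Gf (F z) = z := by
    rintro ⟨z, hz⟩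
    simp only [hs, Finset.mem_insert, Finset.mem_singleton] at hz
    rcases hz with rfl | rfl | rfl | rfl <;>
      simp [F, Gf, hab.symm, hac.symm, had.symm, hbc.symm, hbd.symm, hcd.symm,
        hxy, hxy.symm, hxu, hxu.symm, hxv, hxv.symm, hyu, hyu.symm, hyv, hyv.symm,
        huv, huv.symm, hab, hac, had, hbc, hbd, hcd]
  have hG : ∀ z, F (Gf z) = z := by
    rintro ⟨z, hz⟩
    simp only [ht, Finset.mem_insert, Finset.mem_singleton] at hz
    rcases hz with rfl | rfl | rfl | rfl <;>
      simp [F, Gf, hab.symm, hac.symm, had.symm, hbc.symm, hbd.symm, hcd.symm,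
        hxy, hxy.symm, hxu, hxu.symm, hxv, hxv.symm, hyu, hyu.symm, hyv, hyv.symm,
        huv, huv.symm, hab, hac, had, hbc, hbd, hcd]
  let e : {z // z ∈ s} ≃ {z // z ∈ t} := ⟨F, Gf, hF, hG⟩
  refine ⟨e.extendSubtype, ?_, ?_, ?_, ?_⟩
  · rw [e.extendSubtype_apply_of_mem a hma]
    show (F ⟨a, hma⟩ : V) = x
    simp [F]
  · rw [e.extendSubtype_apply_of_mem b hmb]
    show (F ⟨b, hmb⟩ : V) = y
    simp [F, hab.symm]
  · rw [e.extendSubtype_apply_of_mem c hmc]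
    show (F ⟨c, hmc⟩ : V) = u
    simp [F, hac.symm, hbc.symm]
  · rw [e.extendSubtype_apply_of_mem d hmd]
    show (F ⟨d, hmd⟩ : V) = v
    simp [F, had.symm, hbd.symm, hcd.symm]

lemma mem_disjPairs_top_iff {p : Sym2 (Sym2 V)} :
    p ∈ disjPairs (⊤ : SimpleGraph V) ↔
      (∀ e ∈ p, ¬ e.IsDiag) ∧ p ∈ Sym2.fromRel (r := fun e₁ e₂ : Sym2 V => ∀ v ∈ e₁, v ∉ e₂) ⟨fun _ _ h => disjRel_symm h⟩ := by
  rw [disjPairs, mem_cFilter]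
  simp [SimpleGraph.edgeSet_top]

lemma exists_permPair_eq {p q : Sym2 (Sym2 V)}
    (hp : p ∈ disjPairs (⊤ : SimpleGraph V)) (hq : q ∈ disjPairs (⊤ : SimpleGraph V)) :
    ∃ τ : Equiv.Perm V, permPair τ q = p := by
  rw [mem_disjPairs_top_iff] at hp hq
  induction p using Sym2.ind with
  | _ pe₁ pe₂ =>
  induction pe₁ using Sym2.ind with
  | _ a b =>
  induction pe₂ using Sym2.ind with
  | _ c d =>
  induction q using Sym2.ind with
  | _ qe₁ qe₂ =>
  induction qe₁ using Sym2.ind with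
  | _ x y =>
  induction qe₂ using Sym2.ind with
  | _ u v =>
  obtain ⟨hpd, hpr⟩ := hp
  obtain ⟨hqd, hqr⟩ := hq
  rw [Sym2.fromRel_prop] at hpr hqr
  have hab : a ≠ b := by
    have := hpd s(a, b) (by simp); rwa [Sym2.mk_isDiag_iff] at this
  have hcd : c ≠ d := by
    have := hpd s(c, d) (by simp); rwa [Sym2.mk_isDiag_iff] at this
  have hac : a ≠ c := fun h => hpr a (by simp) (by simp [h])
  have had : a ≠ d := fun h => hpr a (by simp) (by simp [h])
  have hbc : b ≠ c := fun h => hpr b (by simp) (by simp [h])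
  have hbd : b ≠ d := fun h => hpr b (by simp) (by simp [h])
  have hxy : x ≠ y := by
    have := hqd s(x, y) (by simp); rwa [Sym2.mk_isDiag_iff] at this
  have huv : u ≠ v := by
    have := hqd s(u, v) (by simp); rwa [Sym2.mk_isDiag_iff] at this
  have hxu : x ≠ u := fun h => hqr x (by simp) (by simp [h])
  have hxv : x ≠ v := fun h => hqr x (by simp) (by simp [h])
  have hyu : y ≠ u := fun h => hqr y (by simp) (by simp [h])
  have hyv : y ≠ v := fun h => hqr y (by simp) (by simp [h])
  obtain ⟨τ, h1, h2, h3, h4⟩ := exists_perm_four hxy hxu hxv hyu hyv huv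
    hab hac had hbc hbd hcd
  refine ⟨τ, ?_⟩
  unfold permPair
  rw [Sym2.map_pair_eq, Sym2.map_pair_eq, Sym2.map_pair_eq, h1, h2, h3, h4]

end Ext

section MainCount

variable {V : Type*} [Fintype V] [DecidableEq V]

/-- The number of permutations sending a given pair of edges onto a crossing pair. -/
noncomputable def gcount (f₀ : V → ℝ × ℝ) (p : Sym2 (Sym2 V)) : ℕ :=
  (Finset.univ.filter (fun σ : Equiv.Perm V => permPair σ p ∈ crossPairs ⊤ f₀)).card

lemma gcount_const (f₀ : V → ℝ × ℝ) {p q : Sym2 (Sym2 V)}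
    (hp : p ∈ disjPairs (⊤ : SimpleGraph V)) (hq : q ∈ disjPairs (⊤ : SimpleGraph V)) :
    gcount f₀ p = gcount f₀ q := by
  obtain ⟨τ, hτ⟩ := exists_permPair_eq hp hq
  have hτ' : ∀ ρ : Equiv.Perm V, permPair τ⁻¹ p = q := by
    intro ρ
    rw [← hτ, permPair_inv]
  refine Finset.card_bij' (fun σ _ => σ * τ) (fun ρ _ => ρ * τ⁻¹) ?_ ?_ ?_ ?_
  · intro σ hσ
    rw [Finset.mem_filter] at hσ ⊢
    refine ⟨Finset.mem_univ _, ?_⟩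
    rw [← permPair_permPair, hτ]
    exact hσ.2
  · intro ρ hρ
    rw [Finset.mem_filter] at hρ ⊢
    refine ⟨Finset.mem_univ _, ?_⟩
    rw [← permPair_permPair, hτ' ρ]
    exact hρ.2
  · intro σ _
    exact mul_inv_cancel_right σ τ
  · intro ρ _
    exact inv_mul_cancel_right ρ τ

lemma sum_crossing_eq (H : SimpleGraph V) {f₀ : V → ℝ × ℝ} (hf₀ : IsRectilinearDrawing f₀) :
    ∑ σ : Equiv.Perm V, crossingNumber H (f₀ ∘ σ) = ∑ p ∈ disjPairs H, gcount f₀ p := by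
  classical
  have h1 : ∀ σ : Equiv.Perm V, crossingNumber H (f₀ ∘ σ)
      = ∑ p ∈ disjPairs H, (if permPair σ p ∈ crossPairs ⊤ f₀ then 1 else 0) := by
    intro σ
    rw [crossingNumber_eq_card', crossPairs_comp_eq hf₀ σ H, Finset.card_filter]
  simp_rw [h1]
  rw [Finset.sum_comm]
  refine Finset.sum_congr rfl fun p _ => ?_
  rw [gcount, Finset.card_filter]

lemma main_count (G : SimpleGraph V) {f₀ : V → ℝ × ℝ} (hf₀ : IsRectilinearDrawing f₀) :
    (disjPairs (⊤ : SimpleGraph V)).card * ∑ σ : Equiv.Perm V, crossingNumber G (f₀ ∘ σ)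
      = (disjPairs G).card * ((Fintype.card V).factorial * crossingNumber ⊤ f₀) := by
  classical
  have htop : ∑ σ : Equiv.Perm V, crossingNumber ⊤ (f₀ ∘ σ)
      = (Fintype.card V).factorial * crossingNumber (⊤ : SimpleGraph V) f₀ := by
    have : ∀ σ : Equiv.Perm V, crossingNumber ⊤ (f₀ ∘ σ)
        = crossingNumber (⊤ : SimpleGraph V) f₀ := crossingNumber_top_comp hf₀
    simp_rw [this]
    rw [Finset.sum_const, Finset.card_univ, Fintype.card_perm, smul_eq_mul]
  rw [sum_crossing_eq G hf₀, Finset.mul_sum]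
  have hper : ∀ p ∈ disjPairs G, (disjPairs (⊤ : SimpleGraph V)).card * gcount f₀ p
      = ∑ q ∈ disjPairs (⊤ : SimpleGraph V), gcount f₀ q := by
    intro p hp
    have hp' : p ∈ disjPairs (⊤ : SimpleGraph V) := disjPairs_mono le_top hp
    calc (disjPairs (⊤ : SimpleGraph V)).card * gcount f₀ p
        = ∑ _q ∈ disjPairs (⊤ : SimpleGraph V), gcount f₀ p := by
          rw [Finset.sum_const, smul_eq_mul]
      _ = ∑ q ∈ disjPairs (⊤ : SimpleGraph V), gcount f₀ q :=
          Finset.sum_congr rfl fun q hq => (gcount_const f₀ hq hp').symm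
  rw [Finset.sum_congr rfl hper, Finset.sum_const, smul_eq_mul,
    ← sum_crossing_eq ⊤ hf₀, htop]

end MainCount

section Arith

lemma choose_two_mul_two (k : ℕ) : k.choose 2 * 2 = k * (k - 1) := by
  rw [Nat.choose_two_right]
  apply Nat.div_mul_cancel
  rcases k with _ | m
  · simp
  · have : Even ((m + 1) * m) := by
      simpa [mul_comm] using Nat.even_mul_succ_self m
    simpa [Nat.succ_sub_one] using this.two_dvd

lemma factorial_four (m : ℕ) : (m + 4).factorial
    = (m + 4) * (m + 3) * (m + 2) * (m + 1) * m.factorial := by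
  have e4 : m + 4 = (m + 3) + 1 := by omega
  have e3 : m + 3 = (m + 2) + 1 := by omega
  have e2 : m + 2 = (m + 1) + 1 := by omega
  rw [e4, Nat.factorial_succ, ← e4]
  rw [e3, Nat.factorial_succ, ← e3]
  rw [e2, Nat.factorial_succ, ← e2]
  rw [Nat.factorial_succ]
  ring

lemma choose_four_mul (m : ℕ) :
    (m + 4).choose 4 * 24 = (m + 4) * (m + 3) * (m + 2) * (m + 1) := by
  have h := Nat.choose_mul_factorial_mul_factorial (show 4 ≤ m + 4 by omega)
  have h4 : m + 4 - 4 = m := by omega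
  rw [h4] at h
  have hf : Nat.factorial 4 = 24 := rfl
  rw [hf, factorial_four] at h
  have hm : 0 < m.factorial := Nat.factorial_pos m
  exact Nat.eq_of_mul_eq_mul_right hm h

lemma degree_top' {V : Type*} [Fintype V] [DecidableEq V] (v : V) :
    (⊤ : SimpleGraph V).degree v = Fintype.card V - 1 := by
  have hnb : (⊤ : SimpleGraph V).neighborFinset v = Finset.univ.erase v := by
    ext w
    simp [SimpleGraph.mem_neighborFinset, eq_comm, ne_comm]
  rw [← SimpleGraph.card_neighborFinset_eq_degree, hnb,
    Finset.card_erase_of_mem (Finset.mem_univ v), Finset.card_univ]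

end Arith

/-- for any simple graph `G` on `n ≥ 4` vertices,
`rcr(G) ≤ rcr(K_n)/(3·C(n,4)) · (C(m,2) − Σ_v C(d(v),2))`. -/
theorem stmt6 {V : Type*} [Fintype V] [DecidableEq V] (n : ℕ) (hn : 4 ≤ n)
    (hV : Fintype.card V = n) (G : SimpleGraph V) [DecidableRel G.Adj] :
    (rcr G : ℝ) ≤ (rcr (⊤ : SimpleGraph V) : ℝ) / (3 * (n.choose 4 : ℝ)) *
      ((G.edgeFinset.card.choose 2 : ℝ) - ∑ v : V, ((G.degree v).choose 2 : ℝ)) := by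
  classical
  have hNe : Nonempty V := by
    rw [← Fintype.card_pos_iff, hV]; omega
  obtain ⟨m, hm⟩ : ∃ m, n = m + 4 := ⟨n - 4, by omega⟩
  obtain ⟨f₀, hf₀, hopt⟩ := exists_optimal_drawing (⊤ : SimpleGraph V)
  have hEx : ∃ σ ∈ (Finset.univ : Finset (Equiv.Perm V)),
      Fintype.card (Equiv.Perm V) * crossingNumber G (f₀ ∘ σ)
        ≤ ∑ ρ : Equiv.Perm V, crossingNumber G (f₀ ∘ ρ) := by
    apply Finset.exists_le_of_sum_le Finset.univ_nonempty
    rw [← Finset.mul_sum, Finset.sum_const, Finset.card_univ, smul_eq_mul]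
  obtain ⟨σ, -, hσ⟩ := hEx
  have h1 : rcr G ≤ crossingNumber G (f₀ ∘ σ) :=
    rcr_le_crossingNumber (isRectilinearDrawing_comp hf₀ σ)
  have hmc := main_count G hf₀
  rw [hopt] at hmc
  rw [Fintype.card_perm] at hσ
  -- the counting identity for G, in ℝ
  have hD : (((disjPairs G).card : ℕ) : ℝ)
      = (G.edgeFinset.card.choose 2 : ℝ) - ∑ v : V, ((G.degree v).choose 2 : ℝ) := by
    have h := card_disjPairs_add G
    have h' : (((disjPairs G).card : ℕ) : ℝ) + ∑ v : V, ((G.degree v).choose 2 : ℝ)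
        = (G.edgeFinset.card.choose 2 : ℝ) := by exact_mod_cast h
    linarith
  -- the counting identity for ⊤, in ℝ
  have hT : (((disjPairs (⊤ : SimpleGraph V)).card : ℕ) : ℝ) = 3 * (n.choose 4 : ℝ) := by
    have h := card_disjPairs_add (⊤ : SimpleGraph V)
    have hdeg : ∀ v : V, (⊤ : SimpleGraph V).degree v = m + 3 := by
      intro v
      rw [degree_top', hV]
      omega
    have hsum : ∑ v : V, ((⊤ : SimpleGraph V).degree v).choose 2
        = (m + 4) * ((m + 3).choose 2) := by
      rw [Finset.sum_congr rfl (fun v _ => by rw [hdeg v])]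
      rw [Finset.sum_const, Finset.card_univ, hV, hm, smul_eq_mul]
    have hcard : (⊤ : SimpleGraph V).edgeFinset.card = (m + 4).choose 2 := by
      rw [SimpleGraph.card_edgeFinset_top_eq_card_choose_two, hV, hm]
    rw [hsum, hcard] at h
    -- now h : T + (m+4) * (m+3).choose 2 = ((m+4).choose 2).choose 2
    have hc2 : ((m + 3).choose 2 : ℝ) * 2 = ((m : ℝ) + 3) * ((m : ℝ) + 2) := by
      have := choose_two_mul_two (m + 3)
      rw [show m + 3 - 1 = m + 2 by omega] at this
      exact_mod_cast this
    have hX2 : ((m + 4).choose 2 : ℝ) * 2 = ((m : ℝ) + 4) * ((m : ℝ) + 3) := by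
      have := choose_two_mul_two (m + 4)
      rw [show m + 4 - 1 = m + 3 by omega] at this
      exact_mod_cast this
    have hXpos : 1 ≤ (m + 4).choose 2 := Nat.choose_pos (by omega)
    have hc3 : (((m + 4).choose 2).choose 2 : ℝ) * 2
        = ((m + 4).choose 2 : ℝ) * (((m + 4).choose 2 : ℝ) - 1) := by
      have := choose_two_mul_two ((m + 4).choose 2)
      calc (((m + 4).choose 2).choose 2 : ℝ) * 2
          = (((m + 4).choose 2).choose 2 * 2 : ℕ) := by push_cast; ring
        _ = (((m + 4).choose 2) * ((m + 4).choose 2 - 1) : ℕ) := by exact_mod_cast this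
        _ = ((m + 4).choose 2 : ℝ) * (((m + 4).choose 2 : ℝ) - 1) := by
            push_cast [Nat.cast_sub hXpos]; ring
    have hc4 : ((m + 4).choose 4 : ℝ) * 24
        = ((m : ℝ) + 4) * ((m : ℝ) + 3) * ((m : ℝ) + 2) * ((m : ℝ) + 1) := by
      exact_mod_cast choose_four_mul m
    have hTreal : (((disjPairs (⊤ : SimpleGraph V)).card : ℕ) : ℝ)
        + ((m : ℝ) + 4) * ((m + 3).choose 2 : ℝ) = (((m + 4).choose 2).choose 2 : ℝ) := by
      exact_mod_cast h
    rw [hm]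
    push_cast
    set X : ℝ := ((m + 4).choose 2 : ℝ) with hXdef
    linear_combination hTreal - (((m : ℝ) + 4)/2) * hc2 + (1/2) * hc3
      + ((X - 1)/4 + ((m : ℝ) + 4) * ((m : ℝ) + 3)/8) * hX2 - (1/8) * hc4
  -- assemble
  have hr1 : ((rcr G : ℕ) : ℝ) ≤ (crossingNumber G (f₀ ∘ σ) : ℝ) := by exact_mod_cast h1
  have hr2 : (((Fintype.card V).factorial : ℕ) : ℝ) * (crossingNumber G (f₀ ∘ σ) : ℝ)
      ≤ ((∑ ρ : Equiv.Perm V, crossingNumber G (f₀ ∘ ρ) : ℕ) : ℝ) := by exact_mod_cast hσ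
  have hr3 : (((disjPairs (⊤ : SimpleGraph V)).card : ℕ) : ℝ)
        * ((∑ ρ : Equiv.Perm V, crossingNumber G (f₀ ∘ ρ) : ℕ) : ℝ)
      = (((disjPairs G).card : ℕ) : ℝ)
        * ((((Fintype.card V).factorial : ℕ) : ℝ) * ((rcr (⊤ : SimpleGraph V) : ℕ) : ℝ)) := by
    exact_mod_cast hmc
  have hT0 : (0 : ℝ) < (((disjPairs (⊤ : SimpleGraph V)).card : ℕ) : ℝ) := by
    rw [hT]
    have : (0 : ℝ) < (n.choose 4 : ℝ) := by exact_mod_cast Nat.choose_pos hn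
    linarith
  have hN0 : (0 : ℝ) < (((Fintype.card V).factorial : ℕ) : ℝ) := by
    exact_mod_cast (Fintype.card V).factorial_pos
  rw [← hT, ← hD, div_mul_eq_mul_div, le_div_iff₀ hT0]
  have s1 : ((rcr G : ℕ) : ℝ) * (((disjPairs (⊤ : SimpleGraph V)).card : ℕ) : ℝ)
        * (((Fintype.card V).factorial : ℕ) : ℝ)
      ≤ ((rcr (⊤ : SimpleGraph V) : ℕ) : ℝ) * (((disjPairs G).card : ℕ) : ℝ)
        * (((Fintype.card V).factorial : ℕ) : ℝ) := by
    nlinarith [mul_nonneg (sub_nonneg.mpr hr1)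
        (mul_nonneg hT0.le hN0.le),
      mul_nonneg (sub_nonneg.mpr hr2) hT0.le, hr3]
  exact le_of_mul_le_mul_right s1 hN0
end
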